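/- Only vertices on paths from v to u are affected by inserting the edge (u, v): if E' is obtained from E by adding the edge (u, v), and vertices x and y are strongly connected under E' but not strongly connected under E, then under E, v reaches x and x reaches u (so x lies on a path from v to u). -/
import Mathlib


def SConn {V : Type*} (E : V → V → Prop) (x y : V) : Prop :=
  Relation.ReflTransGen E x y ∧ Relation.ReflTransGen E y x

private lemma decompose {V : Type*} {E : V → V → Prop} {u v : V}
    {E' : V → V → Prop} (hE' : ∀ a b, E' a b ↔ E a b ∨ (a = u ∧ b = v))
    {a b : V} (h : Relation.ReflTransGen E' a b) :
    Relation.ReflTransGen E a b ∨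
      (Relation.ReflTransGen E a u ∧ Relation.ReflTransGen E v b) := by
  induction h with
  | refl => exact Or.inl .refl
  | tail _ hcd ih =>
    rcases (hE' _ _).1 hcd with he | ⟨rfl, rfl⟩
    · rcases ih with ih | ⟨h1, h2⟩
      · exact Or.inl (ih.tail he)
      · exact Or.inr ⟨h1, h2.tail he⟩
    · rcases ih with ih | ⟨h1, _⟩
      · exact Or.inr ⟨ih, .refl⟩
      · exact Or.inr ⟨h1, .refl⟩

theorem affected_vertices_on_path {V : Type*} (E : V → V → Prop) (u v : V)
    (E' : V → V → Prop) (hE' : ∀ a b, E' a b ↔ E a b ∨ (a = u ∧ b = v))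
    (x y : V) (h' : SConn E' x y) (h : ¬ SConn E x y) :
    Relation.ReflTransGen E v x ∧ Relation.ReflTransGen E x u := by
  obtain ⟨hxy, hyx⟩ := h'
  rcases decompose hE' hxy with p | ⟨pxu, pvy⟩ <;>
    rcases decompose hE' hyx with q | ⟨qyu, qvx⟩
  · exact absurd ⟨p, q⟩ h
  · exact ⟨qvx, p.trans qyu⟩
  · exact ⟨pvy.trans q, pxu⟩
  · exact ⟨qvx, pxu⟩
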